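/- Let N be a natural number, let U be a linear isometric equivalence of the Euclidean space ℝ^N (with its standard inner product and Lebesgue measure), and let S ⊆ ℝ^N be a bounded measurable set with U(S) = S. Then for every measurable set A ⊆ S, the set of points x ∈ A such that U^[n] x ∉ A for every integer n > 0 has Lebesgue measure zero. -/

import Mathlib

open MeasureTheory

/-- **Linear Recurrence Theorem (preliminary, volume form).** For a linear isometric
equivalence `U` of Euclidean space `ℝ^N` and a bounded measurable `U`-invariant set `S`,
almost every point (w.r.t. Lebesgue measure) of any measurable `A ⊆ S` eventually
returns to `A`. -/
theorem linear_recurrence_volume (N : ℕ)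
    (U : EuclideanSpace ℝ (Fin N) ≃ₗᵢ[ℝ] EuclideanSpace ℝ (Fin N))
    (S : Set (EuclideanSpace ℝ (Fin N)))
    (hSb : Bornology.IsBounded S) (hSm : MeasurableSet S) (hSinv : U '' S = S)
    (A : Set (EuclideanSpace ℝ (Fin N))) (hAS : A ⊆ S) (hAm : MeasurableSet A) :
    volume {x ∈ A | ∀ n : ℕ, 0 < n → (⇑U)^[n] x ∉ A} = 0 := by
  set μ := volume.restrict S with hμ
  have hfin : IsFiniteMeasure μ := by
    constructor
    rw [hμ, Measure.restrict_apply_univ]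
    exact hSb.measure_lt_top
  have hUpre : Set.MapsTo (⇑U) S S := by
    intro x hx
    rw [← hSinv]; exact Set.mem_image_of_mem _ hx
  have hUmp : MeasurePreserving (⇑U) μ μ := by
    have h1 : MeasurePreserving (⇑U) volume volume := U.measurePreserving
    have hpre : ⇑U ⁻¹' S = S := by
      conv_lhs => rw [← hSinv]
      rw [Set.preimage_image_eq _ U.injective]
    have h2 := h1.restrict_preimage_emb (U.toMeasurableEquiv.measurableEmbedding) S
    rwa [hpre] at h2
  have hcons : MeasureTheory.Conservative (⇑U) μ := hUmp.conservative
  have h0 := hcons.measure_mem_forall_ge_image_notMem_eq_zero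
    (hAm.nullMeasurableSet) 1
  have heq : {x ∈ A | ∀ n : ℕ, 0 < n → (⇑U)^[n] x ∉ A}
      = {x ∈ A | ∀ m ≥ 1, (⇑U)^[m] x ∉ A} := rfl
  rw [heq]
  have hsub : {x ∈ A | ∀ m ≥ 1, (⇑U)^[m] x ∉ A} ⊆ S :=
    fun x hx => hAS hx.1
  have hz : volume ({x ∈ A | ∀ m ≥ 1, (⇑U)^[m] x ∉ A} ∩ S) = 0 := by
    rw [← Measure.restrict_apply' hSm]; exact h0
  rwa [Set.inter_eq_self_of_subset_left hsub] at hz
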